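/- Let V = ∑_{i,j=1}^{n} |i⟩⟨j| ⊗ V_{ij} be a bipartite operator on ℂ^n ⊗ ℂ^{d_B} of Schmidt rank exactly n, and suppose for every i the blocks V_{i,1}, ..., V_{i,n} are linearly independent. Then there exists a unit vector (x,y) ∈ ℂ^2 such that the n matrices xV_{1,1}+yV_{2,1}, ..., xV_{1,n}+yV_{2,n} are linearly dependent. -/

import Mathlib

open Matrix Finset

theorem stmt_7 (n dB : ℕ) (hn : 2 ≤ n)
    (V : Matrix (Fin n × Fin dB) (Fin n × Fin dB) ℂ)
    (block : Fin n × Fin n → Matrix (Fin dB) (Fin dB) ℂ)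
    (hblock : ∀ ij : Fin n × Fin n, block ij = Matrix.of fun a b => V (ij.1, a) (ij.2, b))
    (hrank : Module.finrank ℂ (Submodule.span ℂ (Set.range block)) = n)
    (hindep : ∀ i : Fin n, LinearIndependent ℂ (fun j : Fin n => block (i, j))) :
    ∃ x y : ℂ, ‖x‖ ^ 2 + ‖y‖ ^ 2 = 1 ∧
      ¬ LinearIndependent ℂ
        (fun j : Fin n => x • block (⟨0, by omega⟩, j) + y • block (⟨1, by omega⟩, j)) := by
  classical
  have hn0 : (0:ℕ) < n := by omega
  set A : Fin n → Matrix (Fin dB) (Fin dB) ℂ := fun j => block (⟨0, by omega⟩, j) with hA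
  set B : Fin n → Matrix (Fin dB) (Fin dB) ℂ := fun j => block (⟨1, by omega⟩, j) with hB
  have hAind : LinearIndependent ℂ A := hindep _
  have hle : Submodule.span ℂ (Set.range A) ≤ Submodule.span ℂ (Set.range block) := by
    apply Submodule.span_mono
    rintro _ ⟨j, rfl⟩; exact ⟨_, rfl⟩
  have hfr : Module.finrank ℂ ↥(Submodule.span ℂ (Set.range A)) = n := by
    rw [finrank_span_eq_card hAind, Fintype.card_fin]
  have hspan : Submodule.span ℂ (Set.range A) = Submodule.span ℂ (Set.range block) :=
    Submodule.eq_of_le_of_finrank_le hle (by rw [hfr, hrank])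
  have hBmem : ∀ j, B j ∈ Submodule.span ℂ (Set.range A) := by
    intro j; rw [hspan]; exact Submodule.subset_span ⟨_, rfl⟩
  choose T hT using fun j => (Submodule.mem_span_range_iff_exists_fun ℂ).mp (hBmem j)
  set M : Matrix (Fin n) (Fin n) ℂ := Matrix.of fun k j => T j k with hM
  have : Nontrivial (Fin n → ℂ) := by
    haveI : Nonempty (Fin n) := ⟨⟨0, hn0⟩⟩
    infer_instance
  obtain ⟨μ, hμ⟩ := Module.End.exists_eigenvalue (M.mulVecLin)
  obtain ⟨v, hv⟩ := hμ.exists_hasEigenvector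
  have hveq : M.mulVec v = μ • v := hv.apply_eq_smul
  set r : ℝ := Real.sqrt (1 + ‖μ‖ ^ 2) with hrdef
  have hr : 0 < r := Real.sqrt_pos.mpr (by positivity)
  have hr2 : r ^ 2 = 1 + ‖μ‖ ^ 2 := Real.sq_sqrt (by positivity)
  have hrC : (r : ℂ) ≠ 0 := by exact_mod_cast hr.ne'
  refine ⟨μ / (r:ℂ), -1 / (r:ℂ), ?_, ?_⟩
  · have h1 : ‖(-1 / (r:ℂ))‖ = 1 / r := by
      rw [norm_div, Complex.norm_real, Real.norm_of_nonneg hr.le]; simp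
    have h2 : ‖(μ / (r:ℂ))‖ = ‖μ‖ / r := by
      rw [norm_div, Complex.norm_real, Real.norm_of_nonneg hr.le]
    rw [h1, h2]
    field_simp
    linarith [hr2]
  · rw [Fintype.not_linearIndependent_iff]
    refine ⟨v, ?_, ?_⟩
    · have key : ∀ j, v j • ((μ / (r:ℂ)) • A j + (-1 / (r:ℂ)) • B j)
          = (v j * (μ / (r:ℂ))) • A j + (v j * (-1 / (r:ℂ))) • B j := by
        intro j
        rw [smul_add, smul_smul, smul_smul]
      calc ∑ j, v j • ((μ / (r:ℂ)) • A j + (-1 / (r:ℂ)) • B j)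
          = ∑ j, ((v j * (μ / (r:ℂ))) • A j + (v j * (-1 / (r:ℂ))) • B j) := by
            exact Finset.sum_congr rfl fun j _ => key j
        _ = ∑ j, (v j * (μ / (r:ℂ))) • A j + ∑ j, (v j * (-1 / (r:ℂ))) • B j := by
            rw [Finset.sum_add_distrib]
        _ = 0 := by
            have hBsum : ∑ j, (v j * (-1 / (r:ℂ))) • B j
                = ∑ k, ((-1 / (r:ℂ)) * (μ * v k)) • A k := by
              calc ∑ j, (v j * (-1 / (r:ℂ))) • B j
                  = ∑ j, (v j * (-1 / (r:ℂ))) • (∑ k, T j k • A k) := by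
                    exact Finset.sum_congr rfl fun j _ => by rw [hT j]
                _ = ∑ j, ∑ k, (v j * (-1 / (r:ℂ)) * T j k) • A k := by
                    refine Finset.sum_congr rfl fun j _ => ?_
                    rw [Finset.smul_sum]
                    exact Finset.sum_congr rfl fun k _ => by rw [smul_smul]
                _ = ∑ k, ∑ j, (v j * (-1 / (r:ℂ)) * T j k) • A k := by
                    rw [Finset.sum_comm]
                _ = ∑ k, ((-1 / (r:ℂ)) * (μ * v k)) • A k := by
                    refine Finset.sum_congr rfl fun k _ => ?_
                    rw [← Finset.sum_smul]
                    congr 1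
                    have : (M.mulVec v) k = μ * v k := by
                      rw [hveq]; simp
                    rw [Matrix.mulVec, dotProduct] at this
                    calc ∑ j, v j * (-1 / (r:ℂ)) * T j k
                        = (-1 / (r:ℂ)) * ∑ j, T j k * v j := by
                          rw [Finset.mul_sum]
                          exact Finset.sum_congr rfl fun j _ => by ring
                      _ = (-1 / (r:ℂ)) * ∑ j, M k j * v j := rfl
                      _ = (-1 / (r:ℂ)) * (μ * v k) := by rw [this]
            rw [hBsum, ← Finset.sum_add_distrib]
            refine Finset.sum_eq_zero fun k _ => ?_
            rw [← add_smul]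
            convert zero_smul ℂ (A k)
            field_simp
            ring
    · obtain ⟨i, hi⟩ := Function.ne_iff.mp hv.right
      exact ⟨i, hi⟩
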